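/- Let K be an algebraically closed field of characteristic 0, let d ≥ 2, and let W_d be the K-vector space of binary forms of degree d in x, y. Fix O ∈ W_d, O ≠ 0, not a scalar multiple of ℓ^d for any linear form ℓ. Let V ⊆ W_d be a K-linear subspace with O ∈ V and such that ℓ^d ∉ V for every linear form ℓ (i.e. the image of ℙ(V/K·O) in ℙ(W_d/K·O) is disjoint from the projected curve X). Then there exist linear forms ℓ₁, …, ℓ_{d−1} such that V ⊆ span_K{ℓ₁^d, …, ℓ_{d−1}^d} + K·O. -/

import Mathlib

open MvPolynomial Submodule

noncomputable section

/-- A linear form: a nonzero binary (i.e. two-variable) form of degree `1`. -/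
def IsLinForm {K : Type*} [CommSemiring K] (l : MvPolynomial (Fin 2) K) : Prop :=
  l ≠ 0 ∧ l.IsHomogeneous 1

namespace Aux10
variable {K : Type*} [Field K] {d : ℕ}

def ev (d j : ℕ) : Fin 2 →₀ ℕ := Finsupp.single 0 j + Finsupp.single 1 (d - j)

lemma ev_apply0 (d j : ℕ) : ev d j 0 = j := by simp [ev]
lemma ev_inj {d j k : ℕ} (h : ev d j = ev d k) : j = k := by
  have := congrArg (fun f => f 0) h
  simpa [ev_apply0] using this

def mon (K : Type*) [Field K] (d j : ℕ) : MvPolynomial (Fin 2) K := monomial (ev d j) 1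

def Fcoeff (K : Type*) [Field K] (d j : ℕ) : MvPolynomial (Fin 2) K →ₗ[K] K where
  toFun f := coeff (ev d j) f
  map_add' a b := coeff_add _ _ _
  map_smul' c a := by simp [coeff_smul]

def B (K : Type*) [Field K] (d : ℕ) :
    Polynomial K →ₗ[K] (MvPolynomial (Fin 2) K →ₗ[K] K) :=
  ∑ j ∈ Finset.range (d+1),
    ((d.choose j : K))⁻¹ • (Polynomial.lcoeff K (d - j)).smulRight (Fcoeff K d j)

lemma B_apply (q : Polynomial K) (f : MvPolynomial (Fin 2) K) :
    B K d q f = ∑ j ∈ Finset.range (d+1),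
      (d.choose j : K)⁻¹ * (q.coeff (d - j) * coeff (ev d j) f) := by
  simp [B, Fcoeff, LinearMap.sum_apply, Polynomial.lcoeff_apply, mul_assoc]


lemma coeff_mon (d j k : ℕ) :
    coeff (ev d j) (mon K d k) = if k = j then (1:K) else 0 := by
  rw [mon, coeff_monomial]
  by_cases h : k = j
  · subst h; simp
  · rw [if_neg (fun hh => h (ev_inj hh)), if_neg h]

lemma B_mon (q : Polynomial K) {j : ℕ} (hj : j ≤ d) :
    B K d q (mon K d j) = (d.choose j : K)⁻¹ * q.coeff (d - j) := by
  rw [B_apply]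
  rw [Finset.sum_eq_single j]
  · rw [coeff_mon, if_pos rfl, mul_one]
  · intro b _ hb
    rw [coeff_mon, if_neg (Ne.symm hb), mul_zero, mul_zero]
  · intro h; exact absurd (Finset.mem_range.2 (Nat.lt_succ_of_le hj)) h

lemma choose_ne_zero [CharZero K] {j : ℕ} (hj : j ≤ d) : (d.choose j : K) ≠ 0 :=
  Nat.cast_ne_zero.2 (Nat.choose_pos hj).ne'

lemma pow_expand (r : K) (d : ℕ) :
    (X 0 + C r * X 1 : MvPolynomial (Fin 2) K)^d
      = ∑ k ∈ Finset.range (d+1),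
          monomial (ev d k) ((d.choose k : K) * r^(d-k)) := by
  rw [add_pow]
  refine Finset.sum_congr rfl fun k hk => ?_
  have : ((d.choose k : ℕ) : MvPolynomial (Fin 2) K) = C ((d.choose k : K)) := by
    simp
  rw [this, mul_pow, ← C_pow, X_pow_eq_monomial, X_pow_eq_monomial]
  rw [C_mul_monomial, monomial_mul, mul_comm (monomial _ _), C_mul_monomial]
  rw [ev]
  ring_nf

lemma coeff_pow {j : ℕ} (hj : j ≤ d) (r : K) :
    coeff (ev d j) ((X 0 + C r * X 1 : MvPolynomial (Fin 2) K)^d)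
      = (d.choose j : K) * r^(d-j) := by
  rw [pow_expand, coeff_sum]
  rw [Finset.sum_eq_single j]
  · rw [coeff_monomial, if_pos rfl]
  · intro b _ hb
    rw [coeff_monomial, if_neg (fun hh => hb (ev_inj hh))]
  · intro h; exact absurd (Finset.mem_range.2 (Nat.lt_succ_of_le hj)) h

lemma B_pow [CharZero K] (q : Polynomial K) (r : K) :
    B K d q ((X 0 + C r * X 1 : MvPolynomial (Fin 2) K)^d)
      = ∑ k ∈ Finset.range (d+1), q.coeff k * r^k := by
  rw [B_apply]
  have h1 : ∀ j ∈ Finset.range (d+1),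
      (d.choose j : K)⁻¹ * (q.coeff (d - j) *
        coeff (ev d j) ((X 0 + C r * X 1 : MvPolynomial (Fin 2) K)^d))
      = q.coeff (d-j) * r^(d-j) := by
    intro j hj
    have hj' : j ≤ d := Nat.lt_succ_iff.1 (Finset.mem_range.1 hj)
    rw [coeff_pow hj']
    field_simp [choose_ne_zero hj']
  rw [Finset.sum_congr rfl h1]
  have := Finset.sum_range_reflect (fun k => q.coeff k * r^k) (d+1)
  simpa using this

lemma B_eval [CharZero K] (q : Polynomial K) (hq : q.natDegree ≤ d) (r : K) :
    B K d q ((X 0 + C r * X 1 : MvPolynomial (Fin 2) K)^d) = q.eval r := by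
  rw [B_pow, Polynomial.eval_eq_sum_range' (Nat.lt_succ_of_le hq)]

lemma X1_pow_eq_mon : (X 1 : MvPolynomial (Fin 2) K)^d = mon K d 0 := by
  rw [X_pow_eq_monomial, mon, ev]
  simp

lemma B_X1 (q : Polynomial K) : B K d q ((X 1 : MvPolynomial (Fin 2) K)^d) = q.coeff d := by
  rw [X1_pow_eq_mon, B_mon q (Nat.zero_le d)]
  simp


def Msub (K : Type*) [Field K] (d : ℕ) : Submodule K (MvPolynomial (Fin 2) K) :=
  span K (Set.range fun j : Fin (d+1) => mon K d (j:ℕ))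

lemma mon_mem {j : ℕ} (hj : j ≤ d) : mon K d j ∈ Msub K d :=
  subset_span ⟨⟨j, Nat.lt_succ_of_le hj⟩, rfl⟩

lemma hom_mem {f : MvPolynomial (Fin 2) K} (hf : f.IsHomogeneous d) : f ∈ Msub K d := by
  rw [← support_sum_monomial_coeff f]
  refine sum_mem fun s hs => ?_
  have hd : s 0 + s 1 = d := by
    have h1 := hf (mem_support_iff.1 hs)
    simpa [Finsupp.weight, Finsupp.linearCombination, Finsupp.sum_fintype,
      Fin.sum_univ_two] using h1
  have h0 : s 0 ≤ d := by omega
  have hs' : s = ev d (s 0) := by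
    ext a
    fin_cases a
    · simp [ev_apply0]
    · simp [ev]; omega
  have : monomial s (coeff s f) = (coeff s f) • mon K d (s 0) := by
    rw [mon, smul_monomial, smul_eq_mul, mul_one, hs', ev_apply0]
  rw [this]
  exact smul_mem _ _ (mon_mem h0)

lemma mon_li : LinearIndependent K (fun j : Fin (d+1) => mon K d (j:ℕ)) := by
  have h := (basisMonomials (Fin 2) K).linearIndependent
  have he : (fun j : Fin (d+1) => mon K d (j:ℕ))
      = (basisMonomials (Fin 2) K) ∘ (fun j : Fin (d+1) => ev d (j:ℕ)) := by
    funext j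
    simp [mon, coe_basisMonomials]
  rw [he]
  exact h.comp _ (fun a b hab => Fin.ext (ev_inj hab))

lemma finrank_Msub : Module.finrank K (Msub K d) = d + 1 := by
  rw [Msub, finrank_span_eq_card mon_li, Fintype.card_fin]

instance : FiniteDimensional K (Msub K d) :=
  FiniteDimensional.span_of_finite K (Set.finite_range _)

def Ssub (K : Type*) [Field K] (d : ℕ) (V : Submodule K (MvPolynomial (Fin 2) K)) :
    Submodule K (Polynomial K) :=
  Polynomial.degreeLE K d ⊓ (V.dualAnnihilator.comap (B K d))

lemma Ssub_natDegree {V : Submodule K (MvPolynomial (Fin 2) K)} {q : Polynomial K}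
    (hq : q ∈ Ssub K d V) : q.natDegree ≤ d := by
  have := Polynomial.mem_degreeLE.1 hq.1
  exact Polynomial.natDegree_le_iff_degree_le.2 this

lemma Ssub_ann {V : Submodule K (MvPolynomial (Fin 2) K)} {q : Polynomial K}
    (hq : q ∈ Ssub K d V) {f : MvPolynomial (Fin 2) K} (hf : f ∈ V) : B K d q f = 0 :=
  (Submodule.mem_dualAnnihilator _).1 hq.2 f hf

set_option synthInstance.maxHeartbeats 1000000 in
lemma exists_ann [CharZero K] {V : Submodule K (MvPolynomial (Fin 2) K)}
    (hVM : V ≤ Msub K d) {v : MvPolynomial (Fin 2) K} (hv : v ∈ Msub K d) (hvV : v ∉ V) :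
    ∃ q ∈ Ssub K d V, B K d q v ≠ 0 := by
  have hπv : V.mkQ v ≠ 0 := by
    simpa [Submodule.Quotient.mk_eq_zero] using hvV
  obtain ⟨φ, hφ⟩ : ∃ φ : Module.Dual K (MvPolynomial (Fin 2) K ⧸ V), φ (V.mkQ v) ≠ 0 := by
    by_contra h
    push_neg at h
    exact hπv ((Module.forall_dual_apply_eq_zero_iff K _).1 h)
  set ψ : MvPolynomial (Fin 2) K →ₗ[K] K := φ ∘ₗ V.mkQ with hψ
  set q : Polynomial K := ∑ j ∈ Finset.range (d+1),
      Polynomial.monomial (d - j) ((d.choose j : K) * ψ (mon K d j)) with hq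
  have hqc : ∀ j ≤ d, q.coeff (d - j) = (d.choose j : K) * ψ (mon K d j) := by
    intro j hj
    rw [hq, Polynomial.finset_sum_coeff]
    rw [Finset.sum_eq_single j]
    · rw [Polynomial.coeff_monomial, if_pos rfl]
    · intro b hb hbj
      rw [Polynomial.coeff_monomial, if_neg]
      intro hh
      exact hbj (by have hb' : b ≤ d := Nat.lt_succ_iff.1 (Finset.mem_range.1 hb); omega)
    · intro h; exact absurd (Finset.mem_range.2 (Nat.lt_succ_of_le hj)) h
  have hqdeg : q ∈ Polynomial.degreeLE K d := by
    refine sum_mem fun j hj => ?_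
    rw [Polynomial.mem_degreeLE]
    refine (Polynomial.degree_monomial_le _ _).trans ?_
    exact_mod_cast Nat.cast_le.2 (Nat.sub_le d j)
  have hBq : ∀ f ∈ Msub K d, B K d q f = ψ f := by
    have hmon : ∀ j : Fin (d+1), B K d q (mon K d (j:ℕ)) = ψ (mon K d (j:ℕ)) := by
      intro j
      have hj : (j:ℕ) ≤ d := Nat.lt_succ_iff.1 j.isLt
      rw [B_mon _ hj, hqc _ hj, inv_mul_cancel_left₀ (choose_ne_zero hj)]
    intro f hf
    have := LinearMap.eqOn_span (f := B K d q) (g := ψ)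
      (s := Set.range fun j : Fin (d+1) => mon K d (j:ℕ))
      (by rintro x ⟨j, rfl⟩; exact hmon j)
    exact this hf
  refine ⟨q, ⟨hqdeg, (Submodule.mem_dualAnnihilator _).2 fun f hf => ?_⟩, ?_⟩
  · rw [hBq f (hVM hf), hψ]
    simp [(Submodule.Quotient.mk_eq_zero V).2 hf]
  · rw [hBq v hv]
    exact hφ


lemma linform_aff (r : K) : IsLinForm (X 0 + C r * X 1 : MvPolynomial (Fin 2) K) := by
  constructor
  · intro h
    have := congrArg (coeff (Finsupp.single 0 1)) h
    simp [coeff_X', coeff_C_mul, Finsupp.single_eq_single_iff] at this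
  · have h1 : (X 0 : MvPolynomial (Fin 2) K).IsHomogeneous 1 := isHomogeneous_X _ _
    have h2 : (C r * X 1 : MvPolynomial (Fin 2) K).IsHomogeneous 1 := by
      have := (isHomogeneous_C (Fin 2) r).mul (isHomogeneous_X _ 1)
      simpa using this
    exact h1.add h2

lemma linform_X1 : IsLinForm (X 1 : MvPolynomial (Fin 2) K) :=
  ⟨X_ne_zero _, isHomogeneous_X _ _⟩

lemma pow_mem_Msub {l : MvPolynomial (Fin 2) K} (hl : IsLinForm l) :
    l ^ d ∈ Msub K d := by
  have := hl.2.pow d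
  rw [one_mul] at this
  exact hom_mem this

lemma exists_S_eval [CharZero K] {V : Submodule K (MvPolynomial (Fin 2) K)}
    (hVM : V ≤ Msub K d)
    (hVX : ∀ l : MvPolynomial (Fin 2) K, IsLinForm l → l ^ d ∉ V) (r : K) :
    ∃ q ∈ Ssub K d V, q.eval r ≠ 0 := by
  obtain ⟨q, hqS, hq⟩ := exists_ann hVM (pow_mem_Msub (linform_aff r))
    (hVX _ (linform_aff r))
  exact ⟨q, hqS, by rwa [B_eval _ (Ssub_natDegree hqS) r] at hq⟩

lemma exists_S_coeffd [CharZero K] {V : Submodule K (MvPolynomial (Fin 2) K)}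
    (hVM : V ≤ Msub K d)
    (hVX : ∀ l : MvPolynomial (Fin 2) K, IsLinForm l → l ^ d ∉ V) :
    ∃ q ∈ Ssub K d V, q.coeff d ≠ 0 := by
  obtain ⟨q, hqS, hq⟩ := exists_ann hVM (pow_mem_Msub linform_X1) (hVX _ linform_X1)
  exact ⟨q, hqS, by rwa [B_X1] at hq⟩

lemma exists_forall_ne [Infinite K] {M : Type*} [AddCommGroup M] [Module K M]
    [DecidableEq K]
    (S : Submodule K M) (L : List (M →ₗ[K] K))
    (hL : ∀ lam ∈ L, ∃ x ∈ S, lam x ≠ 0) :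
    ∃ g ∈ S, ∀ lam ∈ L, lam g ≠ 0 := by
  induction L with
  | nil => exact ⟨0, S.zero_mem, by simp⟩
  | cons lam L' ih =>
    obtain ⟨g₁, hg₁S, hg₁⟩ := ih fun μ hμ => hL μ (List.mem_cons_of_mem _ hμ)
    obtain ⟨x, hxS, hx⟩ := hL lam List.mem_cons_self
    obtain ⟨t, ht⟩ := Infinite.exists_notMem_finset
      (insert (-lam g₁ / lam x) (L'.map fun μ => -μ g₁ / μ x).toFinset)
    refine ⟨g₁ + t • x, S.add_mem hg₁S (S.smul_mem t hxS), ?_⟩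
    intro μ hμ
    have hval : μ (g₁ + t • x) = μ g₁ + t * μ x := by simp
    rw [hval]
    by_cases hμx : μ x = 0
    · rcases List.mem_cons.1 hμ with rfl | hμ'
      · exact absurd hμx hx
      · simpa [hμx] using hg₁ μ hμ'
    · intro h0
      have hteq : t = -μ g₁ / μ x := by
        rw [eq_div_iff hμx]
        linear_combination h0
      apply ht
      rcases List.mem_cons.1 hμ with rfl | hμ'
      · rw [hteq]; exact Finset.mem_insert_self _ _
      · refine Finset.mem_insert_of_mem ?_
        rw [List.mem_toFinset, hteq]
        exact List.mem_map.2 ⟨μ, hμ', rfl⟩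

end Aux10

open Aux10 in
/-- Proposition 3.1 of the paper applied to the projected rational normal
curve, `m = 1`, `n = d − 1`: let `O ∈ W_d` be nonzero and not a multiple of any `ℓ^d`, and
let `V ⊆ W_d` be a subspace with `O ∈ V` containing no `d`-th power of a linear form (so the
image of `ℙ(V/K·O)` is disjoint from the projected curve `X`).  Then there are linear forms
`ℓ₁, …, ℓ_{d−1}` with `V ⊆ span{ℓ₁^d, …, ℓ_{d−1}^d} + K·O`. -/
theorem subspace_le_span_of_powers_projected
    {K : Type*} [Field K] [IsAlgClosed K] [CharZero K] (d : ℕ) (hd : 2 ≤ d)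
    (O : MvPolynomial (Fin 2) K) (hOd : O.IsHomogeneous d) (hO0 : O ≠ 0)
    (hOC : ∀ (c : K) (l : MvPolynomial (Fin 2) K), IsLinForm l → O ≠ c • l ^ d)
    (V : Submodule K (MvPolynomial (Fin 2) K))
    (hVW : V ≤ homogeneousSubmodule (Fin 2) K d) (hOV : O ∈ V)
    (hVX : ∀ l : MvPolynomial (Fin 2) K, IsLinForm l → l ^ d ∉ V) :
    ∃ l : Fin (d - 1) → MvPolynomial (Fin 2) K, (∀ i, IsLinForm (l i)) ∧
      V ≤ span K (insert O (Set.range fun i => l i ^ d)) := by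
  classical
  have hVM : V ≤ Msub K d := fun f hf =>
    hom_mem ((mem_homogeneousSubmodule _ _).1 (hVW hf))
  set S := Ssub K d V with hS
  have hwit_c : ∃ x ∈ S, (Polynomial.lcoeff K d) x ≠ 0 := by
    obtain ⟨q, hq, hq'⟩ := exists_S_coeffd hVM hVX
    exact ⟨q, hq, by simpa [Polynomial.lcoeff_apply] using hq'⟩
  obtain ⟨f, hfS, hf⟩ := exists_forall_ne S [Polynomial.lcoeff K d]
    (by intro lam hlam; rw [List.mem_singleton] at hlam; subst hlam; exact hwit_c)
  have hfd : f.coeff d ≠ 0 := by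
    simpa [Polynomial.lcoeff_apply] using hf _ (List.mem_singleton_self _)
  have hf0 : f ≠ 0 := fun h => hfd (by simp [h])
  obtain ⟨g, hgS, hg⟩ := exists_forall_ne S
    (Polynomial.lcoeff K d :: f.roots.toFinset.toList.map (fun r => Polynomial.leval r))
    (by
      intro lam hlam
      rcases List.mem_cons.1 hlam with rfl | hlam'
      · exact hwit_c
      · obtain ⟨r, hr, rfl⟩ := List.mem_map.1 hlam'
        obtain ⟨q, hq, hq'⟩ := exists_S_eval hVM hVX r
        exact ⟨q, hq, by simpa using hq'⟩)
  have hgd : g.coeff d ≠ 0 := by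
    simpa [Polynomial.lcoeff_apply] using hg _ List.mem_cons_self
  have hg0 : g ≠ 0 := fun h => hgd (by simp [h])
  have hgr : ∀ z : K, f.eval z = 0 → g.eval z ≠ 0 := by
    intro z hz
    have hzm : z ∈ f.roots.toFinset := by
      rw [Multiset.mem_toFinset, Polynomial.mem_roots']
      exact ⟨hf0, hz⟩
    have := hg (Polynomial.leval z)
      (List.mem_cons_of_mem _ (List.mem_map.2 ⟨z, Finset.mem_toList.2 hzm, rfl⟩))
    simpa using this
  have hcop : IsCoprime f g := by
    rw [← EuclideanDomain.gcd_isUnit_iff]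
    by_contra hne
    have hdeg : (EuclideanDomain.gcd f g).degree ≠ 0 := fun h =>
      hne (Polynomial.isUnit_iff_degree_eq_zero.2 h)
    obtain ⟨z, hz⟩ := IsAlgClosed.exists_root _ hdeg
    exact hgr z
      (Polynomial.eval_eq_zero_of_dvd_of_eval_eq_zero (EuclideanDomain.gcd_dvd_left f g) hz)
      (Polynomial.eval_eq_zero_of_dvd_of_eval_eq_zero (EuclideanDomain.gcd_dvd_right f g) hz)
  have hfnat : f.natDegree = d :=
    le_antisymm (Ssub_natDegree hfS) (Polynomial.le_natDegree_of_ne_zero hfd)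
  set w := Polynomial.derivative f * g - f * Polynomial.derivative g with hw
  have hw0 : w ≠ 0 := by
    intro h0
    have h1 : f ∣ Polynomial.derivative f * g :=
      ⟨Polynomial.derivative g, by rw [hw, sub_eq_zero] at h0; exact h0⟩
    have h2 : f ∣ Polynomial.derivative f := hcop.dvd_of_dvd_mul_right h1
    by_cases h3 : Polynomial.derivative f = 0
    · have := Polynomial.natDegree_eq_zero_of_derivative_eq_zero h3
      omega
    · exact absurd (Polynomial.degree_le_of_dvd h2 h3)
        (not_le.2 (Polynomial.degree_derivative_lt hf0))
  obtain ⟨t, ht⟩ := Infinite.exists_notMem_finset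
    (insert (-f.coeff d / g.coeff d) (w.roots.toFinset.image fun z => -f.eval z / g.eval z))
  set p := f + Polynomial.C t * g with hp
  have hpS : p ∈ S := by
    have : Polynomial.C t * g = t • g := (Polynomial.smul_eq_C_mul t).symm
    rw [hp, this]
    exact S.add_mem hfS (S.smul_mem t hgS)
  have hpc : ∀ z, p.eval z = f.eval z + t * g.eval z := by intro z; simp [hp]
  have hpd : p.coeff d ≠ 0 := by
    intro h0
    have h1 : f.coeff d + t * g.coeff d = 0 := by
      simpa [hp, Polynomial.coeff_C_mul] using h0
    have h2 : t = -f.coeff d / g.coeff d := by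
      rw [eq_div_iff hgd]; linear_combination h1
    exact ht (h2 ▸ Finset.mem_insert_self _ _)
  have hp0 : p ≠ 0 := fun h => hpd (by simp [h])
  have hpnat : p.natDegree = d :=
    le_antisymm (Ssub_natDegree hpS) (Polynomial.le_natDegree_of_ne_zero hpd)
  have hsimple : ∀ z : K, p.IsRoot z → ¬ (Polynomial.derivative p).IsRoot z := by
    intro z hz hz'
    rw [Polynomial.IsRoot, hpc z] at hz
    have hgz : g.eval z ≠ 0 := by
      intro hgz0
      have hfz : f.eval z = 0 := by rw [hgz0] at hz; simpa using hz
      exact hgr z hfz hgz0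
    have hteq : t = -f.eval z / g.eval z := by
      rw [eq_div_iff hgz]; linear_combination hz
    have hz'' : (Polynomial.derivative f).eval z + t * (Polynomial.derivative g).eval z = 0 := by
      have hder : Polynomial.derivative p
          = Polynomial.derivative f + Polynomial.C t * Polynomial.derivative g := by
        simp [hp]
      rw [Polynomial.IsRoot, hder] at hz'
      simpa using hz'
    have hwz : w.eval z = 0 := by
      rw [hw]
      simp only [Polynomial.eval_sub, Polynomial.eval_mul]
      have hfz : f.eval z = - (t * g.eval z) := by linear_combination hz
      have hfz' : (Polynomial.derivative f).eval z
          = - (t * (Polynomial.derivative g).eval z) := by linear_combination hz''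
      rw [hfz, hfz']; ring
    apply ht
    refine Finset.mem_insert_of_mem (Finset.mem_image.2 ⟨z, ?_, hteq.symm⟩)
    rw [Multiset.mem_toFinset, Polynomial.mem_roots']
    exact ⟨hw0, hwz⟩
  have hnodup : p.roots.Nodup := by
    rw [Multiset.nodup_iff_count_le_one]
    intro z
    by_contra hcnt
    push_neg at hcnt
    have h2 : 2 ≤ Polynomial.rootMultiplicity z p := by
      rw [← Polynomial.count_roots]; omega
    obtain ⟨u, hu⟩ : (Polynomial.X - Polynomial.C z)^2 ∣ p :=
      dvd_trans (pow_dvd_pow _ h2) (p.pow_rootMultiplicity_dvd z)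
    have hzroot : p.IsRoot z := by rw [Polynomial.IsRoot, hu]; simp
    have hzroot' : (Polynomial.derivative p).IsRoot z := by
      rw [Polynomial.IsRoot, hu]
      simp [Polynomial.derivative_mul, Polynomial.derivative_pow]
    exact hsimple z hzroot hzroot'
  have hsplit : Multiset.card p.roots = d := by
    rw [← hpnat]
    exact Polynomial.splits_iff_card_roots.1 (IsAlgClosed.splits p)
  have hcard : p.roots.toFinset.card = d := by
    rw [Multiset.toFinset_card_eq_card_iff_nodup.2 hnodup, hsplit]
  set e := Finset.equivFinOfCardEq hcard with he
  set r : Fin d → K := fun i => ((e.symm i : p.roots.toFinset) : K) with hr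
  have hrinj : Function.Injective r := by
    intro i j hij
    exact e.symm.injective (Subtype.ext hij)
  have hroot : ∀ i, p.eval (r i) = 0 := by
    intro i
    have hmem := (e.symm i).2
    rw [Multiset.mem_toFinset, Polynomial.mem_roots'] at hmem
    exact hmem.2
  set P : Fin d → MvPolynomial (Fin 2) K := fun i => (X 0 + C (r i) * X 1)^d with hP
  have hPli : LinearIndependent K P := by
    rw [Fintype.linearIndependent_iff]
    intro c hc k
    set qk := ∏ j ∈ Finset.univ.erase k, (Polynomial.X - Polynomial.C (r j)) with hqk
    have hqknat : qk.natDegree ≤ d := by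
      rw [hqk, Polynomial.natDegree_prod _ _ (fun j _ => Polynomial.X_sub_C_ne_zero (r j))]
      simp only [Polynomial.natDegree_X_sub_C, Finset.sum_const, smul_eq_mul, mul_one]
      rw [Finset.card_erase_of_mem (Finset.mem_univ k), Finset.card_univ, Fintype.card_fin]
      omega
    have h0 := congrArg (B K d qk) hc
    rw [map_sum, map_zero] at h0
    have h1 : ∀ i, B K d qk (c i • P i) = c i * qk.eval (r i) := by
      intro i
      rw [map_smul, smul_eq_mul, hP, B_eval qk hqknat (r i)]
    rw [Finset.sum_congr rfl (fun i _ => h1 i)] at h0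
    rw [Finset.sum_eq_single k] at h0
    · have hqkk : qk.eval (r k) ≠ 0 := by
        rw [hqk, Polynomial.eval_prod]
        refine Finset.prod_ne_zero_iff.2 fun j hj => ?_
        have hjk : j ≠ k := (Finset.mem_erase.1 hj).1
        simp only [Polynomial.eval_sub, Polynomial.eval_X, Polynomial.eval_C]
        exact sub_ne_zero.2 fun hh => hjk (hrinj hh).symm
      exact (mul_eq_zero.1 h0).resolve_right hqkk
    · intro i _ hik
      have : qk.eval (r i) = 0 := by
        rw [hqk, Polynomial.eval_prod]
        refine Finset.prod_eq_zero (Finset.mem_erase.2 ⟨hik, Finset.mem_univ i⟩) ?_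
        simp
      rw [this, mul_zero]
    · intro h; exact absurd (Finset.mem_univ k) h
  set U := span K (Set.range P) with hU
  set N := Msub K d ⊓ LinearMap.ker (B K d p) with hN
  have hUN : U ≤ N := by
    rw [hU, span_le]
    rintro x ⟨i, rfl⟩
    refine ⟨pow_mem_Msub (linform_aff (r i)), LinearMap.mem_ker.2 ?_⟩
    show B K d p (P i) = 0
    rw [hP, B_eval p (Ssub_natDegree hpS) (r i)]
    exact hroot i
  have hVN : V ≤ N := fun x hx => ⟨hVM hx, LinearMap.mem_ker.2 (Ssub_ann hpS hx)⟩
  have hNlt : N < Msub K d := by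
    refine lt_of_le_of_ne inf_le_left fun hEq => ?_
    have hm : mon K d 0 ∈ N := hEq ▸ mon_mem (Nat.zero_le d)
    have hm2 : B K d p (mon K d 0) = 0 := hm.2
    rw [B_mon _ (Nat.zero_le d)] at hm2
    simp only [Nat.choose_zero_right, Nat.cast_one, inv_one, one_mul, Nat.sub_zero] at hm2
    exact hpd hm2
  haveI : FiniteDimensional K N := Submodule.finiteDimensional_of_le hNlt.le
  have hfrN : Module.finrank K N ≤ d := by
    have h1 := Submodule.finrank_lt_finrank_of_lt hNlt
    rw [finrank_Msub] at h1
    omega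
  have hfrU : Module.finrank K U = d := by
    rw [hU, finrank_span_eq_card hPli, Fintype.card_fin]
  have hUeq : U = N := Submodule.eq_of_le_of_finrank_le hUN (by rw [hfrU]; exact hfrN)
  have hVU : V ≤ U := hUeq ▸ hVN
  obtain ⟨c, hc⟩ := (mem_span_range_iff_exists_fun K).1 (hVU hOV)
  obtain ⟨k, hk⟩ : ∃ k, c k ≠ 0 := by
    by_contra h
    push_neg at h
    apply hO0
    rw [← hc]
    simp [h]
  have hd1 : d - 1 + 1 = d := by omega
  set eF : Fin (d-1+1) ≃ Fin d := finCongr hd1 with heF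
  set k' : Fin (d-1+1) := eF.symm k with hk'
  refine ⟨fun i => X 0 + C (r (eF (k'.succAbove i))) * X 1,
    fun i => linform_aff _, ?_⟩
  set T := span K (insert O (Set.range fun i : Fin (d-1) =>
    (X 0 + C (r (eF (k'.succAbove i))) * X 1 : MvPolynomial (Fin 2) K)^d)) with hT
  have hPT' : ∀ j : Fin d, j ≠ k → P j ∈ T := by
    intro j hj
    obtain ⟨i, hi⟩ := Fin.exists_succAbove_eq (x := eF.symm j) (y := k')
      (fun h => hj (by
        have := congrArg eF h
        simpa [hk'] using this))
    apply subset_span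
    refine Set.mem_insert_of_mem _ ⟨i, ?_⟩
    show (X 0 + C (r (eF (k'.succAbove i))) * X 1 : MvPolynomial (Fin 2) K)^d = P j
    rw [hi, hP]
    simp
  have hPT : ∀ j : Fin d, P j ∈ T := by
    intro j
    by_cases hj : j = k
    · subst hj
      have hsum : c j • P j = O - ∑ i ∈ Finset.univ.erase j, c i • P i := by
        rw [← hc, ← Finset.sum_erase_add Finset.univ (fun i => c i • P i) (Finset.mem_univ j),
          add_sub_cancel_left]
      have hmem : c j • P j ∈ T := by
        rw [hsum]
        exact sub_mem (subset_span (Set.mem_insert _ _))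
          (sum_mem fun i hi => smul_mem _ _ (hPT' i (Finset.mem_erase.1 hi).1))
      have hPj : P j = (c j)⁻¹ • (c j • P j) := by
        rw [smul_smul, inv_mul_cancel₀ hk, one_smul]
      rw [hPj]
      exact smul_mem _ _ hmem
    · exact hPT' j hj
  refine le_trans hVU ?_
  rw [hU, span_le]
  rintro x ⟨i, rfl⟩
  exact hPT i
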